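/- For any choice rule C satisfying non-wastefulness, no justified envy, and compliance with VR protections, and any applicant set I, the set of individuals admitted by the meritorious Over-and-Above rule on I Gale dominates the set of individuals admitted by C on I. -/

import Mathlib

attribute [local instance] Classical.propDecidable

noncomputable section
set_option linter.unusedSectionVars false
set_option maxHeartbeats 1600000

variable {ι R : Type*} [Fintype ι] [DecidableEq ι] [Fintype R] [DecidableEq R]

/-- Eligibility sets: everyone is eligible for the open category (`none`),
and `elig c` is the set of members of VR-protected category `c`. -/
def eligOf (elig : R → Finset ι) : Option R → Finset ι
  | none => (Finset.univ : Finset ι)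
  | some c => elig c

/-- Aggregate choice: all individuals chosen across all categories. -/
def aggC (C : Finset ι → Option R → Finset ι) (I : Finset ι) : Finset ι :=
  Finset.univ.biUnion fun v => C I v

/-- `C` is a choice rule for capacities `q` and eligibility `elig`: each category chooses
eligible applicants up to capacity, and no individual is chosen by two categories. -/
def IsChoiceRule (q : Option R → ℕ) (elig : R → Finset ι)
    (C : Finset ι → Option R → Finset ι) : Prop :=
  ∀ I : Finset ι,
    (∀ v, C I v ⊆ I ∩ eligOf elig v) ∧
    (∀ v, (C I v).card ≤ q v) ∧
    (∀ v v', v ≠ v' → Disjoint (C I v) (C I v'))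

/-- Non-wastefulness: no position remains idle while an eligible applicant is unchosen. -/
def NonWasteful (q : Option R → ℕ) (elig : R → Finset ι)
    (C : Finset ι → Option R → Finset ι) : Prop :=
  ∀ (I : Finset ι) (v : Option R) (j : ι),
    j ∈ I → j ∉ aggC C I → (C I v).card < q v → j ∉ eligOf elig v

/-- No justified envy: a chosen individual outscores every eligible entirely-unchosen applicant. -/
def NoJustifiedEnvy (σ : ι → ℝ) (elig : R → Finset ι)
    (C : Finset ι → Option R → Finset ι) : Prop :=
  ∀ (I : Finset ι) (v : Option R) (i j : ι),
    i ∈ C I v → j ∈ I → j ∈ eligOf elig v → j ∉ aggC C I → σ j < σ i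

/-- Compliance with VR protections: a VR recipient implies the open category is full, with
every open-category recipient scoring strictly higher. -/
def CompliesVR (σ : ι → ℝ) (q : Option R → ℕ)
    (C : Finset ι → Option R → Finset ι) : Prop :=
  ∀ (I : Finset ι) (c : R) (i : ι), i ∈ C I (some c) →
    (C I none).card = q none ∧ ∀ j ∈ C I none, σ i < σ j

/-- The (at most) `k` highest merit-score members of `S`. -/
def topK (σ : ι → ℝ) (S : Finset ι) (k : ℕ) : Finset ι :=
  S.filter fun i => (S.filter fun j => σ i ≤ σ j).card ≤ k

/-- The Over-and-Above choice rule: open positions go to the top-merit applicants; then each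
VR category's quota is filled by the highest-merit remaining eligible members. -/
def OA (σ : ι → ℝ) (q : Option R → ℕ) (elig : R → Finset ι)
    (I : Finset ι) : Option R → Finset ι
  | none => topK σ I (q none)
  | some c => topK σ ((I \ topK σ I (q none)) ∩ elig c) (q (some c))

/-- `μ` is a matching of members of `S` to VR-protected positions: every matched individual
belongs to `S` and is eligible for her category, and capacities `qr` are respected. -/
def IsVRMatching (qr : R → ℕ) (elig : R → Finset ι) (S : Finset ι) (μ : ι → Option R) : Prop :=
  (∀ i c, μ i = some c → i ∈ S ∧ i ∈ elig c) ∧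
  ∀ c, (Finset.univ.filter fun i => μ i = some c).card ≤ qr c

/-- Number of individuals matched by `μ`. -/
def matchedCount (μ : ι → Option R) : ℕ :=
  (Finset.univ.filter fun i => (μ i).isSome).card

/-- The VR-maximality function `β`: the maximum number of VR-protected positions that can be
simultaneously filled by eligible members of `S`. -/
def VRmax (qr : R → ℕ) (elig : R → Finset ι) (S : Finset ι) : ℕ :=
  Finset.univ.sup fun μ : ι → Option R =>
    if IsVRMatching qr elig S μ then matchedCount μ else 0

/-- Step 2 of the meritorious Over-and-Above rule (with fuel): repeatedly add the
highest-merit remaining individual of `J` who increases the VR-utilization. -/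
def mGreedy (σ : ι → ℝ) (qr : R → ℕ) (elig : R → Finset ι) (J : Finset ι) :
    ℕ → Finset ι → Finset ι
  | 0, S => S
  | n + 1, S =>
    let cand := (J \ S).filter fun i => VRmax qr elig (insert i S) = VRmax qr elig S + 1
    if h : cand.Nonempty then
      mGreedy σ qr elig J n (insert (Finset.exists_max_image cand σ h).choose S)
    else S

/-- The individuals chosen in Step 2 of the meritorious Over-and-Above rule on `I`,
where `qo` is the open-category capacity. -/
def mStep2 (σ : ι → ℝ) (qo : ℕ) (qr : R → ℕ) (elig : R → Finset ι) (I : Finset ι) : Finset ι :=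
  mGreedy σ qr elig (I \ topK σ I qo) (Fintype.card ι) ∅

/-- The aggregate of the meritorious Over-and-Above rule: the top-merit open recipients
together with the Step-2 greedy VR recipients. -/
def mOAagg (σ : ι → ℝ) (qo : ℕ) (qr : R → ℕ) (elig : R → Finset ι) (I : Finset ι) : Finset ι :=
  topK σ I qo ∪ mStep2 σ qo qr elig I

/-- The `ℓ`-th highest merit score among members of `S`, defaulting to `0`. -/
def nthScore (σ : ι → ℝ) (S : Finset ι) (ℓ : ℕ) : ℝ :=
  (((S.image σ).sort (· ≤ ·)).reverse).getD ℓ 0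

/-- `I` Gale dominates `J` with respect to merit scores `σ`. -/
def GaleDom (σ : ι → ℝ) (I J : Finset ι) : Prop :=
  J.card ≤ I.card ∧ ∀ ℓ < J.card, nthScore σ J ℓ ≤ nthScore σ I ℓ



section AuxRank

def gcut (qr : R → ℕ) (elig : R → Finset ι) (J : Finset R) (S : Finset ι) : ℕ :=
  (∑ c ∈ J, qr c) + (S.filter fun i => ∃ c, c ∉ J ∧ i ∈ elig c).card

def rk (qr : R → ℕ) (elig : R → Finset ι) (S : Finset ι) : ℕ :=
  Finset.univ.inf' Finset.univ_nonempty (fun J => gcut qr elig J S)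

variable {qr : R → ℕ} {elig : R → Finset ι}

lemma rk_le_gcut (J : Finset R) (S : Finset ι) : rk qr elig S ≤ gcut qr elig J S :=
  Finset.inf'_le _ (Finset.mem_univ J)

lemma exists_gcut_eq_rk (S : Finset ι) : ∃ J, rk qr elig S = gcut qr elig J S := by
  obtain ⟨J, -, hJ⟩ := Finset.exists_mem_eq_inf' (Finset.univ_nonempty) (fun J => gcut qr elig J S)
  exact ⟨J, hJ⟩

lemma card_filter_eq_sum_univ (S : Finset ι) (p : ι → Prop) [DecidablePred p] :
    (S.filter p).card = ∑ a : ι, if a ∈ S ∧ p a then 1 else 0 := by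
  rw [Finset.card_filter]
  rw [← Finset.sum_subset (Finset.subset_univ S) (f := fun a => if a ∈ S ∧ p a then 1 else 0)
    (fun x _ hx => by simp [hx])]
  exact Finset.sum_congr rfl (fun x hx => by simp [hx])

private lemma ite_count (U V PX PY Q1 Q2 QJ QJ' : Prop)
    [Decidable (U ∧ Q1)] [Decidable (V ∧ Q2)] [Decidable (PX ∧ QJ)] [Decidable (PY ∧ QJ')]
    (hU : U ↔ PX ∨ PY) (hV : V ↔ PX ∧ PY)
    (h1 : Q1 → QJ) (h2 : Q1 → QJ') (h3 : Q2 → QJ ∨ QJ') :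
    ((if U ∧ Q1 then 1 else 0) + (if V ∧ Q2 then 1 else 0) : ℕ) ≤
      (if PX ∧ QJ then 1 else 0) + (if PY ∧ QJ' then 1 else 0) := by
  by_cases hpx : PX <;> by_cases hpy : PY <;> by_cases hq1 : Q1 <;> by_cases hq2 : Q2 <;>
    by_cases hqj : QJ <;> by_cases hqj' : QJ' <;>
    simp [hU, hV, hpx, hpy, hq1, hq2, hqj, hqj'] <;> tauto

lemma rk_submodular (X Y : Finset ι) :
    rk qr elig (X ∪ Y) + rk qr elig (X ∩ Y) ≤ rk qr elig X + rk qr elig Y := by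
  obtain ⟨J, hJ⟩ := exists_gcut_eq_rk (qr := qr) (elig := elig) X
  obtain ⟨J', hJ'⟩ := exists_gcut_eq_rk (qr := qr) (elig := elig) Y
  rw [hJ, hJ']
  refine le_trans (Nat.add_le_add (rk_le_gcut (J ∪ J') _) (rk_le_gcut (J ∩ J') _)) ?_
  simp only [gcut]
  have hsum : (∑ c ∈ J ∪ J', qr c) + (∑ c ∈ J ∩ J', qr c)
      = (∑ c ∈ J, qr c) + (∑ c ∈ J', qr c) := Finset.sum_union_inter
  have hcard :
      ((X ∪ Y).filter fun i => ∃ c, c ∉ J ∪ J' ∧ i ∈ elig c).card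
        + ((X ∩ Y).filter fun i => ∃ c, c ∉ J ∩ J' ∧ i ∈ elig c).card
      ≤ (X.filter fun i => ∃ c, c ∉ J ∧ i ∈ elig c).card
        + (Y.filter fun i => ∃ c, c ∉ J' ∧ i ∈ elig c).card := by
    simp only [card_filter_eq_sum_univ]
    rw [← Finset.sum_add_distrib, ← Finset.sum_add_distrib]
    refine Finset.sum_le_sum fun a _ => ?_
    have h1 : (∃ c, c ∉ J ∪ J' ∧ a ∈ elig c) → (∃ c, c ∉ J ∧ a ∈ elig c) := by
      rintro ⟨c, hc, he⟩; exact ⟨c, fun h => hc (Finset.mem_union_left _ h), he⟩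
    have h2 : (∃ c, c ∉ J ∪ J' ∧ a ∈ elig c) → (∃ c, c ∉ J' ∧ a ∈ elig c) := by
      rintro ⟨c, hc, he⟩; exact ⟨c, fun h => hc (Finset.mem_union_right _ h), he⟩
    have h3 : (∃ c, c ∉ J ∩ J' ∧ a ∈ elig c) →
        (∃ c, c ∉ J ∧ a ∈ elig c) ∨ (∃ c, c ∉ J' ∧ a ∈ elig c) := by
      rintro ⟨c, hc, he⟩
      rcases Decidable.em (c ∈ J) with h | h
      · exact Or.inr ⟨c, fun h' => hc (Finset.mem_inter.2 ⟨h, h'⟩), he⟩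
      · exact Or.inl ⟨c, h, he⟩
    exact ite_count _ _ _ _ _ _ _ _ (Finset.mem_union) (Finset.mem_inter) h1 h2 h3
  omega

lemma rk_le_card (S : Finset ι) : rk qr elig S ≤ S.card :=
  (rk_le_gcut ∅ S).trans (by simpa [gcut] using Finset.card_le_card (Finset.filter_subset _ S))

lemma rk_empty : rk qr elig (∅ : Finset ι) = 0 :=
  Nat.le_antisymm (by simpa using rk_le_card (qr := qr) (elig := elig) ∅) (Nat.zero_le _)

lemma rk_insert_le (x : ι) (S : Finset ι) :
    rk qr elig (insert x S) ≤ rk qr elig S + 1 := by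
  obtain ⟨J, hJ⟩ := exists_gcut_eq_rk (qr := qr) (elig := elig) S
  refine (rk_le_gcut J _).trans ?_
  rw [hJ]
  have hs : (Finset.filter (fun i => ∃ c, c ∉ J ∧ i ∈ elig c) (insert x S)) ⊆
      insert x (Finset.filter (fun i => ∃ c, c ∉ J ∧ i ∈ elig c) S) := by
    intro a ha
    simp only [Finset.mem_filter, Finset.mem_insert] at ha ⊢
    tauto
  have hc := Finset.card_le_card hs
  have h2 := Finset.card_insert_le x (Finset.filter (fun i => ∃ c, c ∉ J ∧ i ∈ elig c) S)
  simp only [gcut]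
  omega

lemma rk_mono' {S T : Finset ι} (h : S ⊆ T) : rk qr elig S ≤ rk qr elig T := by
  obtain ⟨J, hJ⟩ := exists_gcut_eq_rk (qr := qr) (elig := elig) T
  refine (rk_le_gcut J S).trans (hJ ▸ ?_)
  exact Nat.add_le_add_left (Finset.card_le_card (Finset.filter_subset_filter _ h)) _

lemma rk_insert_spanning {A : Finset ι} {x : ι} (h : rk qr elig (insert x A) = rk qr elig A)
    (B : Finset ι) : rk qr elig (insert x (A ∪ B)) = rk qr elig (A ∪ B) := by
  by_cases hx : x ∈ A ∪ B
  · rw [Finset.insert_eq_self.2 hx]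
  · have hsub := rk_submodular (qr := qr) (elig := elig) (insert x A) (A ∪ B)
    have hunion : insert x A ∪ (A ∪ B) = insert x (A ∪ B) := by
      ext a
      simp only [Finset.mem_union, Finset.mem_insert]
      tauto
    have hint : insert x A ∩ (A ∪ B) = A := by
      ext a
      simp only [Finset.mem_inter, Finset.mem_insert, Finset.mem_union] at *
      constructor
      · rintro ⟨rfl | ha, h2⟩
        · exact absurd h2 (by simpa using hx)
        · exact ha
      · intro ha
        exact ⟨Or.inr ha, Or.inl ha⟩
    rw [hunion, hint, h] at hsub
    have := rk_mono' (qr := qr) (elig := elig) (Finset.subset_insert x (A ∪ B))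
    omega

lemma rk_union_spanning {A B : Finset ι} (h : ∀ x ∈ B, rk qr elig (insert x A) = rk qr elig A) :
    rk qr elig (A ∪ B) = rk qr elig A := by
  induction B using Finset.induction_on with
  | empty => rw [Finset.union_empty]
  | @insert b B hb ih =>
      have h1 : A ∪ insert b B = insert b (A ∪ B) := by
        ext a; simp only [Finset.mem_union, Finset.mem_insert]; tauto
      rw [h1, rk_insert_spanning (h b (Finset.mem_insert_self b B)) B,
        ih fun x hx => h x (Finset.mem_insert_of_mem hx)]

lemma rk_union_le_card (A B : Finset ι) : rk qr elig (A ∪ B) ≤ rk qr elig A + B.card := by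
  induction B using Finset.induction_on with
  | empty => simp
  | @insert b B hb ih =>
      have h1 : A ∪ insert b B = insert b (A ∪ B) := by
        ext a; simp only [Finset.mem_union, Finset.mem_insert]; tauto
      have := rk_insert_le (qr := qr) (elig := elig) b (A ∪ B)
      rw [h1, Finset.card_insert_of_notMem hb]
      omega

lemma rk_subset_indep {A B : Finset ι} (hAB : A ⊆ B) (h : rk qr elig B = B.card) :
    rk qr elig A = A.card := by
  have h1 : A ∪ (B \ A) = B := Finset.union_sdiff_of_subset hAB
  have h2 := rk_union_le_card (qr := qr) (elig := elig) A (B \ A)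
  rw [h1, h] at h2
  have h3 := Finset.card_sdiff_of_subset hAB
  have h4 := rk_le_card (qr := qr) (elig := elig) A
  have h5 := Finset.card_le_card hAB
  omega

lemma card_attach_filter (S : Finset ι) (p : ι → Prop) [DecidablePred p] :
    (S.attach.filter fun i => p i.1).card = (S.filter p).card := by
  have himg : (S.attach.filter fun i => p i.1).image Subtype.val = S.filter p := by
    ext a
    simp only [Finset.mem_image, Finset.mem_filter, Finset.mem_attach, true_and,
      Subtype.exists, exists_and_right, exists_eq_right]
    constructor
    · rintro ⟨ha, hpa⟩; exact ⟨ha, hpa⟩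
    · rintro ⟨ha, hpa⟩; exact ⟨ha, hpa⟩
  rw [← himg, Finset.card_image_of_injOn (Subtype.val_injective.injOn)]

lemma matching_le_vrmax {S : Finset ι} {μ : ι → Option R} (h : IsVRMatching qr elig S μ) :
    matchedCount μ ≤ VRmax qr elig S := by
  have := Finset.le_sup (f := fun μ : ι → Option R =>
    if IsVRMatching qr elig S μ then matchedCount μ else 0) (Finset.mem_univ μ)
  simp only [if_pos h] at this; exact this

lemma matching_le_gcut {S : Finset ι} {μ : ι → Option R} (h : IsVRMatching qr elig S μ)
    (J : Finset R) : matchedCount μ ≤ gcut qr elig J S := by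
  classical
  set M := Finset.univ.filter fun i => (μ i).isSome with hM
  set M1 := M.filter (fun i => ∀ c, μ i = some c → c ∈ J) with hM1
  set M2 := M.filter (fun i => ¬ ∀ c, μ i = some c → c ∈ J) with hM2
  have hunion : M1 ∪ M2 = M := Finset.filter_union_filter_not_eq _ M
  have hcard : M.card ≤ M1.card + M2.card := by
    rw [← hunion]; exact Finset.card_union_le _ _
  have h1 : M1 ⊆ J.biUnion (fun c => Finset.univ.filter fun i => μ i = some c) := by
    intro i hi
    simp only [hM1, hM, Finset.mem_filter, Finset.mem_univ, true_and] at hi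
    obtain ⟨hsome, hall⟩ := hi
    obtain ⟨c, hc⟩ := Option.isSome_iff_exists.1 hsome
    exact Finset.mem_biUnion.2 ⟨c, hall c hc, by simp [hc]⟩
  have h1c : M1.card ≤ ∑ c ∈ J, qr c :=
    (Finset.card_le_card h1).trans ((Finset.card_biUnion_le).trans
      (Finset.sum_le_sum fun c _ => h.2 c))
  have h2 : M2 ⊆ S.filter fun i => ∃ c, c ∉ J ∧ i ∈ elig c := by
    intro i hi
    simp only [hM2, hM, Finset.mem_filter, Finset.mem_univ, true_and, not_forall] at hi
    obtain ⟨hsome, c, hc, hcJ⟩ := hi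
    obtain ⟨hiS, hielig⟩ := h.1 i c hc
    exact Finset.mem_filter.2 ⟨hiS, c, hcJ, hielig⟩
  have h2c := Finset.card_le_card h2
  simp only [gcut]
  have : matchedCount μ = M.card := rfl
  omega

lemma vrmax_le_rk (S : Finset ι) : VRmax qr elig S ≤ rk qr elig S := by
  refine Finset.sup_le fun μ _ => ?_
  split_ifs with h
  · obtain ⟨J, -, hJ⟩ := Finset.exists_mem_eq_inf' (Finset.univ_nonempty)
      (fun J => gcut qr elig J S)
    rw [rk, hJ]
    exact matching_le_gcut h J
  · exact Nat.zero_le _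

lemma rk_le_vrmax (S : Finset ι) : rk qr elig S ≤ VRmax qr elig S := by
  classical
  set d := S.card - rk qr elig S with hd
  have hrkS := rk_le_card (qr := qr) (elig := elig) S
  set t : {i // i ∈ S} → Finset ((Σ c : R, Fin (qr c)) ⊕ Fin d) := fun i =>
    ((Finset.univ.filter (fun c : R => (i : ι) ∈ elig c)).sigma
        (fun c => (Finset.univ : Finset (Fin (qr c))))).map
      ⟨Sum.inl, Sum.inl_injective⟩ ∪
    (Finset.univ : Finset (Fin d)).map ⟨Sum.inr, Sum.inr_injective⟩ with ht
  have hall : ∀ s : Finset {i // i ∈ S}, s.card ≤ (s.biUnion t).card := by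
    intro s
    rcases s.eq_empty_or_nonempty with rfl | hne
    · simp
    set Js := Finset.univ.filter (fun c : R => ∃ i ∈ s, (i : ι) ∈ elig c) with hJs
    have hbU : s.biUnion t =
        (Js.sigma fun c => (Finset.univ : Finset (Fin (qr c)))).map
          ⟨Sum.inl, Sum.inl_injective⟩ ∪
        (Finset.univ : Finset (Fin d)).map ⟨Sum.inr, Sum.inr_injective⟩ := by
      ext a
      simp only [Finset.mem_biUnion, ht, Finset.mem_union, Finset.mem_map,
        Finset.mem_sigma, Finset.mem_filter, Finset.mem_univ, true_and,
        Function.Embedding.coeFn_mk, hJs]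
      constructor
      · rintro ⟨i, hi, hcase⟩
        rcases hcase with ⟨p, ⟨hp, -⟩, rfl⟩ | h2
        · exact Or.inl ⟨p, ⟨⟨i, hi, hp⟩, trivial⟩, rfl⟩
        · exact Or.inr h2
      · rintro (⟨p, ⟨⟨i, hi, hp⟩, -⟩, rfl⟩ | ⟨k, rfl⟩)
        · exact ⟨i, hi, Or.inl ⟨p, ⟨hp, trivial⟩, rfl⟩⟩
        · obtain ⟨i, hi⟩ := hne
          exact ⟨i, hi, Or.inr ⟨k, rfl⟩⟩
    have hdisj : Disjoint
        ((Js.sigma fun c => (Finset.univ : Finset (Fin (qr c)))).map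
          ⟨Sum.inl, Sum.inl_injective⟩)
        ((Finset.univ : Finset (Fin d)).map ⟨Sum.inr, Sum.inr_injective⟩) := by
      simp only [Finset.disjoint_left, Finset.mem_map, Function.Embedding.coeFn_mk]
      rintro a ⟨x, -, rfl⟩ ⟨y, -, h⟩
      exact Sum.inl_ne_inr h.symm
    have hcardU : (s.biUnion t).card = (∑ c ∈ Js, qr c) + d := by
      rw [hbU, Finset.card_union_of_disjoint hdisj, Finset.card_map, Finset.card_map,
        Finset.card_sigma]
      simp
    rw [hcardU]
    have key := rk_le_gcut (qr := qr) (elig := elig) Js S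
    have himg : s.image Subtype.val ⊆
        S.filter (fun i => ¬ ∃ c, c ∉ Js ∧ i ∈ elig c) := by
      intro a ha
      obtain ⟨i, hi, rfl⟩ := Finset.mem_image.1 ha
      refine Finset.mem_filter.2 ⟨i.2, ?_⟩
      rintro ⟨c, hcJ, hce⟩
      apply hcJ
      simp only [hJs, Finset.mem_filter, Finset.mem_univ, true_and]
      exact ⟨i, hi, hce⟩
    have hs : s.card ≤ (S.filter (fun i => ¬ ∃ c, c ∉ Js ∧ i ∈ elig c)).card := by
      have := Finset.card_le_card himg
      rwa [Finset.card_image_of_injOn (Subtype.val_injective.injOn)] at this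
    have hpart := Finset.card_filter_add_card_filter_not (s := S)
      (p := fun i => ∃ c, c ∉ Js ∧ i ∈ elig c)
    simp only [gcut] at key
    omega
  obtain ⟨f, hfinj, hft⟩ := (Finset.all_card_le_biUnion_card_iff_exists_injective t).1 hall
  set μ : ι → Option R := fun i =>
    if h : i ∈ S then Sum.elim (fun p => some p.1) (fun _ => none) (f ⟨i, h⟩) else none with hμ
  have hμval : ∀ i : {i // i ∈ S}, μ ↑i = Sum.elim (fun p => some p.1) (fun _ => none) (f i) := by
    intro i
    simp only [hμ, dif_pos i.2]
  have hextract : ∀ (i : {i // i ∈ S}) (c : R), μ ↑i = some c →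
      ∃ j : Fin (qr c), f i = Sum.inl ⟨c, j⟩ := by
    intro i c hc
    rw [hμval i] at hc
    rcases hf : f i with p | k
    · obtain ⟨c', j⟩ := p
      rw [hf] at hc
      simp only [Sum.elim_inl, Option.some.injEq] at hc
      subst hc
      exact ⟨j, rfl⟩
    · rw [hf] at hc
      simp at hc
  have hmS : ∀ i c, μ i = some c → i ∈ S := by
    intro i c hc
    by_contra h
    simp [hμ, dif_neg h] at hc
  have hmatch : IsVRMatching qr elig S μ := by
    constructor
    · intro i c hc
      have hiS := hmS i c hc
      refine ⟨hiS, ?_⟩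
      obtain ⟨j, hj⟩ := hextract ⟨i, hiS⟩ c hc
      have := hft ⟨i, hiS⟩
      rw [hj] at this
      simp only [ht, Finset.mem_union, Finset.mem_map, Function.Embedding.coeFn_mk,
        Finset.mem_sigma, Finset.mem_filter, Finset.mem_univ, true_and] at this
      rcases this with ⟨⟨c', j'⟩, ⟨hc', -⟩, heq⟩ | h2
      · obtain ⟨rfl, -⟩ : c' = c ∧ HEq j' j := by
          have h3 := Sum.inl.inj heq
          exact ⟨congrArg Sigma.fst h3, (Sigma.mk.inj_iff.1 h3).2⟩
        exact hc'
      · exfalso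
        rcases h2 with ⟨a, ha⟩
        simp at ha
    · intro c
      have hsub : Finset.univ.filter (fun i => μ i = some c)
          = S.filter (fun i => μ i = some c) := by
        ext i
        simp only [Finset.mem_filter, Finset.mem_univ, true_and]
        exact ⟨fun h => ⟨hmS i c h, h⟩, fun h => h.2⟩
      rw [hsub, ← card_attach_filter S (fun i => μ i = some c)]
      have : (S.attach.filter fun i => μ i.1 = some c).card ≤ (Finset.range (qr c)).card := by
        refine Finset.card_le_card_of_injOn
          (fun i => Sum.elim (fun p => p.2.val) (fun _ => 0) (f i)) ?_ ?_
        · intro i hi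
          dsimp only
          simp only [Finset.mem_coe, Finset.mem_filter] at hi
          obtain ⟨j, hj⟩ := hextract i c hi.2
          rw [hj]
          simpa using j.2
        · intro i hi i' hi' heq
          dsimp only at heq
          simp only [Finset.mem_coe, Finset.mem_filter] at hi hi'
          obtain ⟨j, hj⟩ := hextract i c hi.2
          obtain ⟨j', hj'⟩ := hextract i' c hi'.2
          rw [hj, hj'] at heq
          simp only [Sum.elim_inl] at heq
          apply hfinj
          rw [hj, hj']
          rw [show j = j' from Fin.ext heq]
      simpa using this
  have hcount : rk qr elig S ≤ matchedCount μ := by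
    have hsub : Finset.univ.filter (fun i => (μ i).isSome)
        = S.filter (fun i => (μ i).isSome) := by
      ext i
      simp only [Finset.mem_filter, Finset.mem_univ, true_and]
      refine ⟨fun h => ⟨?_, h⟩, fun h => h.2⟩
      obtain ⟨c, hc⟩ := Option.isSome_iff_exists.1 h
      exact hmS i c hc
    have hML : matchedCount μ = (S.attach.filter fun i => (f i).isLeft).card := by
      rw [matchedCount, hsub, ← card_attach_filter S (fun i => (μ i).isSome)]
      congr 1
      apply Finset.filter_congr
      intro i _
      rw [hμval i]
      rcases f i with p | k <;> simp
    have hMR : (S.attach.filter fun i => ¬ (f i).isLeft).card ≤ d := by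
      have : (S.attach.filter fun i => ¬ (f i).isLeft).card ≤ (Finset.range d).card := by
        refine Finset.card_le_card_of_injOn
          (fun i => Sum.elim (fun _ => 0) (fun k => k.val) (f i)) ?_ ?_
        · intro i hi
          dsimp only
          simp only [Finset.mem_coe, Finset.mem_filter] at hi
          rcases hf : f i with p | k
          · rw [hf] at hi; simp at hi
          · simpa using k.2
        · intro i hi i' hi' heq
          dsimp only at heq
          simp only [Finset.mem_coe, Finset.mem_filter] at hi hi'
          rcases hf : f i with p | k
          · rw [hf] at hi; simp at hi
          rcases hf' : f i' with p' | k'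
          · rw [hf'] at hi'; simp at hi'
          rw [hf, hf'] at heq
          simp only [Sum.elim_inr] at heq
          apply hfinj
          rw [hf, hf']
          rw [show k = k' from Fin.ext heq]
      simpa using this
    have hpart := Finset.card_filter_add_card_filter_not (s := S.attach)
      (p := fun i => (f i).isLeft)
    rw [Finset.card_attach] at hpart
    omega
  exact hcount.trans (matching_le_vrmax hmatch)

lemma vrmax_eq_rk (S : Finset ι) : VRmax qr elig S = rk qr elig S :=
  le_antisymm (vrmax_le_rk S) (rk_le_vrmax S)

end AuxRank

section AuxGreedy

variable {qr : R → ℕ} {elig : R → Finset ι} {σ : ι → ℝ}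

lemma vrmax_mono {S T : Finset ι} (h : S ⊆ T) : VRmax qr elig S ≤ VRmax qr elig T := by
  simp only [vrmax_eq_rk]; exact rk_mono' h

lemma vrmax_le_card (S : Finset ι) : VRmax qr elig S ≤ S.card := by
  rw [vrmax_eq_rk]; exact rk_le_card S

lemma vrmax_insert_le (x : ι) (S : Finset ι) :
    VRmax qr elig (insert x S) ≤ VRmax qr elig S + 1 := by
  simp only [vrmax_eq_rk]; exact rk_insert_le x S

lemma vrmax_insert_eq_of_ne {x : ι} {S : Finset ι}
    (h : VRmax qr elig (insert x S) ≠ VRmax qr elig S + 1) :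
    VRmax qr elig (insert x S) = VRmax qr elig S := by
  have h1 := vrmax_insert_le (qr := qr) (elig := elig) x S
  have h2 := vrmax_mono (qr := qr) (elig := elig) (Finset.subset_insert x S)
  omega

lemma vrmax_insert_spanning {A : Finset ι} {x y : ι}
    (h : VRmax qr elig (insert x A) = VRmax qr elig A) :
    VRmax qr elig (insert x (insert y A)) = VRmax qr elig (insert y A) := by
  simp only [vrmax_eq_rk] at h ⊢
  have := rk_insert_spanning (qr := qr) (elig := elig) h {y}
  rwa [Finset.union_comm, ← Finset.insert_eq] at this

lemma vrmax_union_spanning {A B : Finset ι}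
    (h : ∀ x ∈ B, VRmax qr elig (insert x A) = VRmax qr elig A) :
    VRmax qr elig (A ∪ B) = VRmax qr elig A := by
  simp only [vrmax_eq_rk] at *
  exact rk_union_spanning h

lemma vrmax_subset_indep {A B : Finset ι} (hAB : A ⊆ B) (h : VRmax qr elig B = B.card) :
    VRmax qr elig A = A.card := by
  simp only [vrmax_eq_rk] at *
  exact rk_subset_indep hAB h

/-- Greedy invariant. -/
def GInv (σ : ι → ℝ) (qr : R → ℕ) (elig : R → Finset ι) (J S : Finset ι) : Prop :=
  S ⊆ J ∧ VRmax qr elig S = S.card ∧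
  ∀ x ∈ J, x ∉ S → (∃ g ∈ S, σ g ≤ σ x) →
    VRmax qr elig (insert x (S.filter fun g => σ x < σ g)) =
      VRmax qr elig (S.filter fun g => σ x < σ g)

lemma mGreedy_spec (hσ : Function.Injective σ) (J : Finset ι) :
    ∀ (n : ℕ) (S : Finset ι), GInv σ qr elig J S → (J \ S).card ≤ n →
      GInv σ qr elig J (mGreedy σ qr elig J n S) ∧
      ∀ x ∈ J, x ∉ mGreedy σ qr elig J n S →
        VRmax qr elig (insert x (mGreedy σ qr elig J n S)) =
          VRmax qr elig (mGreedy σ qr elig J n S) := by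
  intro n
  induction n with
  | zero =>
      intro S hInv hcard
      have hJS : J \ S = ∅ := Finset.card_eq_zero.1 (Nat.le_zero.1 hcard)
      have hsub : J ⊆ S := by
        intro x hx
        by_contra hxS
        have : x ∈ J \ S := Finset.mem_sdiff.2 ⟨hx, hxS⟩
        rw [hJS] at this
        exact absurd this (Finset.notMem_empty x)
      refine ⟨hInv, fun x hx hxG => absurd (hsub hx) ?_⟩
      simpa [mGreedy] using hxG
  | succ n ih =>
      intro S hInv hcard
      rw [mGreedy]
      set cand := (J \ S).filter
        (fun i => VRmax qr elig (insert i S) = VRmax qr elig S + 1) with hcand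
      by_cases hc : cand.Nonempty
      · rw [dif_pos hc]
        obtain ⟨himem, himax⟩ := (Finset.exists_max_image cand σ hc).choose_spec
        set i := (Finset.exists_max_image cand σ hc).choose with hi
        have hiJS : i ∈ J \ S := (Finset.mem_filter.1 himem).1
        have hiaug : VRmax qr elig (insert i S) = VRmax qr elig S + 1 :=
          (Finset.mem_filter.1 himem).2
        have hiJ : i ∈ J := (Finset.mem_sdiff.1 hiJS).1
        have hiS : i ∉ S := (Finset.mem_sdiff.1 hiJS).2
        have hInv' : GInv σ qr elig J (insert i S) := by
          refine ⟨Finset.insert_subset hiJ hInv.1, ?_, ?_⟩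
          · rw [hiaug, hInv.2.1, Finset.card_insert_of_notMem hiS]
          · intro x hxJ hxiS hgex
            have hxi : x ≠ i := fun h => hxiS (h ▸ Finset.mem_insert_self x S)
            have hxS : x ∉ S := fun h => hxiS (Finset.mem_insert_of_mem h)
            by_cases hix : σ x < σ i
            · have hF : (insert i S).filter (fun g => σ x < σ g)
                  = insert i (S.filter fun g => σ x < σ g) := by
                rw [Finset.filter_insert, if_pos hix]
              by_cases hgS : ∃ g ∈ S, σ g ≤ σ x
              · have h3 := hInv.2.2 x hxJ hxS hgS
                rw [hF]
                exact vrmax_insert_spanning h3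
              · exfalso
                obtain ⟨g, hgmem, hgle⟩ := hgex
                rcases Finset.mem_insert.1 hgmem with rfl | hgmem'
                · exact absurd hgle (not_le.2 hix)
                · exact hgS ⟨g, hgmem', hgle⟩
            · have hilt : σ i < σ x := by
                rcases lt_or_eq_of_le (not_lt.1 hix) with h | h
                · exact h
                · exact absurd (hσ h) (Ne.symm hxi)
              have hF : (insert i S).filter (fun g => σ x < σ g)
                  = S.filter (fun g => σ x < σ g) := by
                rw [Finset.filter_insert, if_neg (not_lt.2 hilt.le)]
              rw [hF]
              by_cases hgS : ∃ g ∈ S, σ g ≤ σ x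
              · exact hInv.2.2 x hxJ hxS hgS
              · have hSf : S.filter (fun g => σ x < σ g) = S := by
                  refine Finset.filter_true_of_mem (fun g hg => ?_)
                  by_contra hgx
                  exact hgS ⟨g, hg, not_lt.1 hgx⟩
                rw [hSf]
                have hxcand : x ∉ cand := by
                  intro hx
                  exact absurd (himax x hx) (not_le.2 hilt)
                have : ¬ (VRmax qr elig (insert x S) = VRmax qr elig S + 1) := by
                  intro h
                  exact hxcand (Finset.mem_filter.2 ⟨Finset.mem_sdiff.2 ⟨hxJ, hxS⟩, h⟩)
                exact vrmax_insert_eq_of_ne this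
        have hcard' : (J \ insert i S).card ≤ n := by
          have herase : J \ insert i S = (J \ S).erase i := by
            ext a
            simp only [Finset.mem_sdiff, Finset.mem_erase, Finset.mem_insert]
            tauto
          rw [herase, Finset.card_erase_of_mem hiJS]
          have : 1 ≤ (J \ S).card := Finset.card_pos.2 ⟨i, hiJS⟩
          omega
        exact ih (insert i S) hInv' hcard'
      · rw [dif_neg hc]
        refine ⟨hInv, fun x hxJ hxS => ?_⟩
        apply vrmax_insert_eq_of_ne
        intro h
        exact hc ⟨x, Finset.mem_filter.2 ⟨Finset.mem_sdiff.2 ⟨hxJ, hxS⟩, h⟩⟩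

lemma mGreedy_final (hσ : Function.Injective σ) (J : Finset ι) :
    (mGreedy σ qr elig J (Fintype.card ι) ∅ ⊆ J) ∧
    VRmax qr elig (mGreedy σ qr elig J (Fintype.card ι) ∅)
      = (mGreedy σ qr elig J (Fintype.card ι) ∅).card ∧
    ∀ x ∈ J, x ∉ mGreedy σ qr elig J (Fintype.card ι) ∅ →
      VRmax qr elig (insert x ((mGreedy σ qr elig J (Fintype.card ι) ∅).filter
          (fun g => σ x < σ g)))
        = VRmax qr elig ((mGreedy σ qr elig J (Fintype.card ι) ∅).filter
          (fun g => σ x < σ g)) := by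
  have hInv0 : GInv σ qr elig J ∅ := by
    refine ⟨Finset.empty_subset J, by simpa using vrmax_le_card (qr := qr) (elig := elig) ∅, ?_⟩
    rintro x - - ⟨g, hg, -⟩
    exact absurd hg (Finset.notMem_empty g)
  have hcard0 : (J \ ∅).card ≤ Fintype.card ι := by
    simpa using Finset.card_le_univ J
  obtain ⟨hInv, hterm⟩ := mGreedy_spec hσ J (Fintype.card ι) ∅ hInv0 hcard0
  set G := mGreedy σ qr elig J (Fintype.card ι) ∅
  refine ⟨hInv.1, hInv.2.1, fun x hxJ hxG => ?_⟩
  by_cases hgS : ∃ g ∈ G, σ g ≤ σ x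
  · exact hInv.2.2 x hxJ hxG hgS
  · have hGf : G.filter (fun g => σ x < σ g) = G := by
      refine Finset.filter_true_of_mem (fun g hg => ?_)
      by_contra hgx
      exact hgS ⟨g, hg, not_lt.1 hgx⟩
    rw [hGf]
    exact hterm x hxJ hxG

lemma mGreedy_count (hσ : Function.Injective σ) (J X : Finset ι) (hXJ : X ⊆ J)
    (hXind : VRmax qr elig X = X.card) (t : ℝ) :
    (X.filter fun i => t ≤ σ i).card
      ≤ ((mGreedy σ qr elig J (Fintype.card ι) ∅).filter fun i => t ≤ σ i).card := by
  obtain ⟨hGJ, hGind, hG3⟩ := mGreedy_final (qr := qr) (elig := elig) hσ J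
  set G := mGreedy σ qr elig J (Fintype.card ι) ∅ with hG
  set A := G.filter (fun i => t ≤ σ i) with hA
  set B := X.filter (fun i => t ≤ σ i) with hB
  by_contra hlt
  push_neg at hlt
  have hBind : VRmax qr elig B = B.card :=
    vrmax_subset_indep (Finset.filter_subset _ X) hXind
  have hAind : VRmax qr elig A = A.card :=
    vrmax_subset_indep (Finset.filter_subset _ G) hGind
  have h1 : B.card ≤ VRmax qr elig (A ∪ B) := by
    rw [← hBind]
    exact vrmax_mono Finset.subset_union_right
  have h2 : ∃ x ∈ B, VRmax qr elig (insert x A) ≠ VRmax qr elig A := by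
    by_contra hall
    push_neg at hall
    have := vrmax_union_spanning (qr := qr) (elig := elig) (A := A) (B := B) hall
    rw [this, hAind] at h1
    omega
  obtain ⟨x, hxB, hxne⟩ := h2
  have hxX : x ∈ X := (Finset.mem_filter.1 hxB).1
  have hxt : t ≤ σ x := (Finset.mem_filter.1 hxB).2
  have hins : VRmax qr elig (insert x A) = VRmax qr elig A + 1 := by
    have h3 := vrmax_insert_le (qr := qr) (elig := elig) x A
    have h4 := vrmax_mono (qr := qr) (elig := elig) (Finset.subset_insert x A)
    omega
  have hxA : x ∉ A := by
    intro h
    rw [Finset.insert_eq_self.2 h] at hins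
    omega
  have hxG : x ∉ G := fun h => hxA (Finset.mem_filter.2 ⟨h, hxt⟩)
  have hinsind : VRmax qr elig (insert x A) = (insert x A).card := by
    rw [hins, hAind, Finset.card_insert_of_notMem hxA]
  have hGfA : G.filter (fun g => σ x < σ g) ⊆ insert x A := by
    intro g hg
    obtain ⟨hgG, hgx⟩ := Finset.mem_filter.1 hg
    exact Finset.mem_insert_of_mem (Finset.mem_filter.2 ⟨hgG, le_trans hxt hgx.le⟩)
  have hxGf : x ∉ G.filter (fun g => σ x < σ g) := by
    intro h
    exact absurd (Finset.mem_filter.1 h).2 (lt_irrefl _)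
  have hid1 : VRmax qr elig (insert x (G.filter (fun g => σ x < σ g)))
      = (G.filter (fun g => σ x < σ g)).card + 1 := by
    have : VRmax qr elig (insert x (G.filter (fun g => σ x < σ g)))
        = (insert x (G.filter (fun g => σ x < σ g))).card := by
      refine vrmax_subset_indep ?_ hinsind
      intro a ha
      rcases Finset.mem_insert.1 ha with rfl | h
      · exact Finset.mem_insert_self _ _
      · exact hGfA h
    rw [this, Finset.card_insert_of_notMem hxGf]
  have hid2 : VRmax qr elig (G.filter (fun g => σ x < σ g))
      = (G.filter (fun g => σ x < σ g)).card := by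
    exact vrmax_subset_indep hGfA hinsind
  have := hG3 x (hXJ hxX) hxG
  omega

end AuxGreedy

section AuxGale

lemma cnt_eq_countP (M : Finset ℝ) (t : ℝ) :
    (M.filter (fun x => t ≤ x)).card
      = ((M.sort (· ≤ ·)).reverse).countP (fun x => decide (t ≤ x)) := by
  rw [List.countP_reverse, (Finset.sort_perm_toList (s := M) (r := (· ≤ ·))).countP_eq]
  rw [← Multiset.coe_countP, Finset.toList, Multiset.coe_toList,
    Multiset.countP_eq_card_filter]
  rfl

lemma sorted_desc_of_sort (M : Finset ℝ) :
    ((M.sort (· ≤ ·)).reverse).Pairwise (fun a b => b ≤ a) := by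
  rw [List.pairwise_reverse]
  exact Finset.pairwise_sort (s := M) (r := (· ≤ ·))

-- L1
lemma countP_ge_sorted {l : List ℝ} (hl : l.Pairwise (fun a b => b ≤ a)) {m : ℕ}
    (hm : m < l.length) :
    m + 1 ≤ l.countP (fun a => decide (l.getD m 0 ≤ a)) := by
  have hsplit : l = l.take (m+1) ++ l.drop (m+1) := (List.take_append_drop _ l).symm
  have hlen : (l.take (m+1)).length = m + 1 := by
    rw [List.length_take]
    omega
  have hall : ∀ a ∈ l.take (m+1), l.getD m 0 ≤ a := by
    intro a ha
    obtain ⟨p, hp, rfl⟩ := List.getElem_of_mem ha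
    rw [List.getElem_take]
    rw [List.getD_eq_getElem l 0 hm]
    have hple : p ≤ m := by
      rw [hlen] at hp
      omega
    rcases eq_or_lt_of_le hple with rfl | hplt
    · rfl
    · have := List.pairwise_iff_get.1 hl ⟨p, by omega⟩ ⟨m, hm⟩ (by simpa using hplt)
      simpa using this
  calc m + 1 = (l.take (m+1)).countP (fun a => decide (l.getD m 0 ≤ a)) := by
        rw [List.countP_eq_length_filter]
        rw [List.filter_eq_self.2 (fun a ha => by simpa using hall a ha), hlen]
    _ ≤ l.countP (fun a => decide (l.getD m 0 ≤ a)) := by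
        have hap := List.countP_append (l₁ := l.take (m+1)) (l₂ := l.drop (m+1))
          (p := fun a => decide (l.getD m 0 ≤ a))
        rw [List.take_append_drop] at hap
        omega

-- L2
lemma le_getD_of_countP {l : List ℝ} (hl : l.Pairwise (fun a b => b ≤ a)) {m : ℕ} {t : ℝ}
    (h : m + 1 ≤ l.countP (fun a => decide (t ≤ a))) : t ≤ l.getD m 0 := by
  have hm : m < l.length := by
    have := List.countP_le_length (p := fun a => decide (t ≤ a)) (l := l)
    omega
  by_contra hlt
  push_neg at hlt
  rw [List.getD_eq_getElem l 0 hm] at hlt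
  have hdrop : ∀ a ∈ l.drop m, ¬ (t ≤ a) := by
    intro a ha
    obtain ⟨p, hp, rfl⟩ := List.getElem_of_mem ha
    have hlen' : m + p < l.length := by
      rw [List.length_drop] at hp
      omega
    rw [List.getElem_drop]
    intro hta
    have hle : l[m + p] ≤ l[m] := by
      rcases Nat.eq_zero_or_pos p with rfl | hpos
      · simp
      · have := List.pairwise_iff_get.1 hl ⟨m, hm⟩ ⟨m + p, hlen'⟩ (by simp; omega)
        simpa using this
    linarith
  have : l.countP (fun a => decide (t ≤ a)) ≤ m := by
    conv_lhs => rw [← List.take_append_drop m l, List.countP_append]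
    have h1 : (l.drop m).countP (fun a => decide (t ≤ a)) = 0 := by
      rw [List.countP_eq_zero]
      intro a ha
      simpa using hdrop a ha
    have h2 := List.countP_le_length (p := fun a => decide (t ≤ a)) (l := l.take m)
    rw [List.length_take] at h2
    omega
  omega


variable {σ : ι → ℝ}

lemma cnt_image (hσ : Function.Injective σ) (S : Finset ι) (t : ℝ) :
    ((S.image σ).filter fun x => t ≤ x).card = (S.filter fun i => t ≤ σ i).card := by
  rw [Finset.filter_image]
  exact Finset.card_image_of_injOn (hσ.injOn)

lemma length_revsort (hσ : Function.Injective σ) (S : Finset ι) :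
    (((S.image σ).sort (· ≤ ·)).reverse).length = S.card := by
  rw [List.length_reverse, Finset.length_sort, Finset.card_image_of_injective _ hσ]

lemma galeDom_of_counts (hσ : Function.Injective σ) (A B : Finset ι)
    (h : ∀ t : ℝ, (B.filter fun i => t ≤ σ i).card ≤ (A.filter fun i => t ≤ σ i).card) :
    GaleDom σ A B := by
  constructor
  · rcases B.eq_empty_or_nonempty with rfl | hne
    · simp
    · obtain ⟨b, hb⟩ := hne
      set t0 := (B.image σ).min' ⟨σ b, Finset.mem_image_of_mem σ hb⟩ with ht0
      have hfull : B.filter (fun i => t0 ≤ σ i) = B := by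
        refine Finset.filter_true_of_mem (fun i hi => ?_)
        exact Finset.min'_le _ _ (Finset.mem_image_of_mem σ hi)
      have := h t0
      rw [hfull] at this
      exact this.trans (Finset.card_le_card (Finset.filter_subset _ A))
  · intro m hm
    set lB := ((B.image σ).sort (· ≤ ·)).reverse with hlB
    set lA := ((A.image σ).sort (· ≤ ·)).reverse with hlA
    have hnB : nthScore σ B m = lB.getD m 0 := rfl
    have hnA : nthScore σ A m = lA.getD m 0 := rfl
    set t := lB.getD m 0 with htdef
    have hmlen : m < lB.length := by rw [length_revsort hσ]; exact hm
    have h1 : m + 1 ≤ lB.countP (fun a => decide (t ≤ a)) :=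
      countP_ge_sorted (sorted_desc_of_sort _) hmlen
    have h2 : lB.countP (fun a => decide (t ≤ a)) = (B.filter fun i => t ≤ σ i).card := by
      rw [hlB, ← cnt_eq_countP, cnt_image hσ]
    have h3 : lA.countP (fun a => decide (t ≤ a)) = (A.filter fun i => t ≤ σ i).card := by
      rw [hlA, ← cnt_eq_countP, cnt_image hσ]
    have h4 : m + 1 ≤ lA.countP (fun a => decide (t ≤ a)) := by
      rw [h3]
      exact h1.trans (h2 ▸ h t)
    rw [hnB, hnA]
    exact le_getD_of_countP (sorted_desc_of_sort _) h4

lemma high_subset_topK (I : Finset ι) (k : ℕ) (t : ℝ)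
    (h : (I.filter fun i => t ≤ σ i).card ≤ k) :
    (I.filter fun i => t ≤ σ i) ⊆ topK σ I k := by
  intro i hi
  obtain ⟨hiI, hit⟩ := Finset.mem_filter.1 hi
  refine Finset.mem_filter.2 ⟨hiI, le_trans (Finset.card_le_card ?_) h⟩
  intro j hj
  obtain ⟨hjI, hij⟩ := Finset.mem_filter.1 hj
  exact Finset.mem_filter.2 ⟨hjI, le_trans hit hij⟩

lemma topK_high {I : Finset ι} {k : ℕ} {t : ℝ}
    (h : k < (I.filter fun i => t ≤ σ i).card) :
    ∀ i ∈ topK σ I k, t ≤ σ i := by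
  intro i hi
  obtain ⟨hiI, hrank⟩ := Finset.mem_filter.1 hi
  have hns : ¬ (I.filter fun j => t ≤ σ j) ⊆ (I.filter fun j => σ i ≤ σ j) := by
    intro hsub
    have := Finset.card_le_card hsub
    omega
  obtain ⟨j, hj1, hj2⟩ := Finset.not_subset.1 hns
  obtain ⟨hjI, hjt⟩ := Finset.mem_filter.1 hj1
  have : ¬ (σ i ≤ σ j) := fun hc => hj2 (Finset.mem_filter.2 ⟨hjI, hc⟩)
  linarith
 
lemma le_topK_card (hσ : Function.Injective σ) {I : Finset ι} {k : ℕ} (h : k ≤ I.card) :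
    k ≤ (topK σ I k).card := by
  by_contra hlt
  push_neg at hlt
  rcases (I \ topK σ I k).eq_empty_or_nonempty with hemp | hne
  · have hsub : I ⊆ topK σ I k := Finset.sdiff_eq_empty_iff_subset.1 hemp
    have := Finset.card_le_card hsub
    omega
  · obtain ⟨x, hx, hmax⟩ := Finset.exists_max_image _ σ hne
    obtain ⟨hxI, hxT⟩ := Finset.mem_sdiff.1 hx
    have hsub : I.filter (fun j => σ x ≤ σ j) ⊆ insert x (topK σ I k) := by
      intro j hj
      obtain ⟨hjI, hxj⟩ := Finset.mem_filter.1 hj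
      by_cases hjx : j = x
      · exact hjx ▸ Finset.mem_insert_self _ _
      · have hlt2 : σ x < σ j := lt_of_le_of_ne hxj (fun hc => hjx (hσ hc.symm))
        refine Finset.mem_insert_of_mem ?_
        by_contra hjT
        have := hmax j (Finset.mem_sdiff.2 ⟨hjI, hjT⟩)
        linarith
    have hrank : ¬ ((I.filter fun j => σ x ≤ σ j).card ≤ k) := by
      intro hc
      exact hxT (Finset.mem_filter.2 ⟨hxI, hc⟩)
    have h1 := Finset.card_le_card hsub
    have h2 := Finset.card_insert_le x (topK σ I k)
    omega

end AuxGale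

/-- the aggregate of the meritorious Over-and-Above rule Gale dominates the
aggregate of any choice rule satisfying the three axioms. -/
theorem mOA_galeDom (σ : ι → ℝ) (hσ : Function.Injective σ)
    (q : Option R → ℕ) (elig : R → Finset ι)
    (C : Finset ι → Option R → Finset ι) (hC : IsChoiceRule q elig C)
    (hnw : NonWasteful q elig C) (hnje : NoJustifiedEnvy σ elig C)
    (hcvr : CompliesVR σ q C) :
    ∀ I : Finset ι,
      GaleDom σ (mOAagg σ (q none) (fun c => q (some c)) elig I) (aggC C I) := by
  intro I
  obtain ⟨hCsub, hCcap, hCdisj⟩ := hC I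
  set qo := q none with hqo
  set qrr : R → ℕ := fun c => q (some c) with hqrr
  set T := topK σ I qo with hT
  set G := mStep2 σ qo qrr elig I with hG
  have hAgg : mOAagg σ qo qrr elig I = T ∪ G := rfl
  rw [hAgg]
  apply galeDom_of_counts hσ
  intro t
  -- A-side
  have hGJ : G ⊆ I \ T := (mGreedy_final (qr := qrr) (elig := elig) hσ (I \ T)).1
  have hdisjTG : Disjoint T G := Finset.disjoint_sdiff.mono_right hGJ
  have hAcnt : ((T ∪ G).filter fun i => t ≤ σ i).card
      = (T.filter fun i => t ≤ σ i).card + (G.filter fun i => t ≤ σ i).card := by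
    rw [Finset.filter_union]
    exact Finset.card_union_of_disjoint
      (Finset.disjoint_filter_filter hdisjTG)
  -- B-side decomposition
  set VRp := Finset.univ.biUnion (fun c : R => C I (some c)) with hVRp
  have hBsub : (aggC C I).filter (fun i => t ≤ σ i)
      ⊆ (C I none).filter (fun i => t ≤ σ i) ∪ VRp.filter (fun i => t ≤ σ i) := by
    intro i hi
    obtain ⟨hiagg, hit⟩ := Finset.mem_filter.1 hi
    obtain ⟨v, -, hv⟩ := Finset.mem_biUnion.1 hiagg
    rcases v with _ | c
    · exact Finset.mem_union_left _ (Finset.mem_filter.2 ⟨hv, hit⟩)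
    · exact Finset.mem_union_right _ (Finset.mem_filter.2
        ⟨Finset.mem_biUnion.2 ⟨c, Finset.mem_univ c, hv⟩, hit⟩)
  have hBbound : ((aggC C I).filter fun i => t ≤ σ i).card
      ≤ ((C I none).filter fun i => t ≤ σ i).card
        + (VRp.filter fun i => t ≤ σ i).card :=
    (Finset.card_le_card hBsub).trans (Finset.card_union_le _ _)
  set X := VRp.filter (fun i => t ≤ σ i) with hX
  have haggI : aggC C I ⊆ I := by
    intro i hi
    obtain ⟨v, -, hv⟩ := Finset.mem_biUnion.1 hi
    exact (Finset.mem_inter.1 (hCsub v hv)).1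
  by_cases hcase : (I.filter fun i => t ≤ σ i).card ≤ qo
  · -- all high scorers fit in the open category
    have hIT : (I.filter fun i => t ≤ σ i) ⊆ T := high_subset_topK I qo t hcase
    have hsub2 : (aggC C I).filter (fun i => t ≤ σ i) ⊆ (T ∪ G).filter (fun i => t ≤ σ i) := by
      intro i hi
      obtain ⟨hiagg, hit⟩ := Finset.mem_filter.1 hi
      refine Finset.mem_filter.2 ⟨Finset.mem_union_left _ ?_, hit⟩
      exact hIT (Finset.mem_filter.2 ⟨haggI hiagg, hit⟩)
    exact Finset.card_le_card hsub2
  · push_neg at hcase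
    have hTt : ∀ i ∈ T, t ≤ σ i := topK_high hcase
    have hTcard : qo ≤ T.card := by
      refine le_topK_card hσ ?_
      exact le_trans hcase.le (Finset.card_le_card (Finset.filter_subset _ I))
    have hcntT : (T.filter fun i => t ≤ σ i).card = T.card := by
      rw [Finset.filter_true_of_mem hTt]
    have hCnone_le : ((C I none).filter fun i => t ≤ σ i).card ≤ qo := by
      refine le_trans (Finset.card_le_card (Finset.filter_subset _ _)) ?_
      exact hCcap none
    rcases X.eq_empty_or_nonempty with hXemp | hXne
    · -- no VR recipient above threshold
      rw [hAcnt]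
      have hx0 : X.card = 0 := by rw [hXemp]; rfl
      omega
    · obtain ⟨i0, hi0⟩ := hXne
      obtain ⟨hi0VR, hi0t⟩ := Finset.mem_filter.1 hi0
      obtain ⟨c0, -, hi0C⟩ := Finset.mem_biUnion.1 hi0VR
      obtain ⟨hfull, hopen⟩ := hcvr I c0 i0 hi0C
      -- open category recipients are all above threshold
      have hCnoneH : ∀ j ∈ C I none, t ≤ σ j := fun j hj => le_trans hi0t (hopen j hj).le
      have hcntCnone : ((C I none).filter fun i => t ≤ σ i).card = qo := by
        rw [Finset.filter_true_of_mem hCnoneH, hfull]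
      -- VR recipients in X avoid the top block
      have hnotT : ∀ (i : ι) (c : R), i ∈ C I (some c) → i ∉ T := by
        intro i c hiC hiT
        obtain ⟨hfull', hopen'⟩ := hcvr I c i hiC
        obtain ⟨hiI, hirank⟩ := Finset.mem_filter.1 hiT
        have hsubI : insert i (C I none) ⊆ I.filter (fun j => σ i ≤ σ j) := by
          intro j hj
          rcases Finset.mem_insert.1 hj with rfl | hjC
          · exact Finset.mem_filter.2 ⟨hiI, le_refl _⟩
          · exact Finset.mem_filter.2 ⟨(Finset.mem_inter.1 (hCsub none hjC)).1,
              (hopen' j hjC).le⟩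
        have hiCn : i ∉ C I none := fun hc => absurd (hopen' i hc) (lt_irrefl _)
        have hc1 := Finset.card_le_card hsubI
        rw [Finset.card_insert_of_notMem hiCn, hfull'] at hc1
        omega
      have hXJ : X ⊆ I \ T := by
        intro i hi
        obtain ⟨hiVR, hit⟩ := Finset.mem_filter.1 hi
        obtain ⟨c, -, hiC⟩ := Finset.mem_biUnion.1 hiVR
        exact Finset.mem_sdiff.2 ⟨(Finset.mem_inter.1 (hCsub (some c) hiC)).1,
          hnotT i c hiC⟩
      -- X is VR-matchable
      have hex : ∀ i ∈ X, ∃ c, i ∈ C I (some c) := by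
        intro i hi
        obtain ⟨hiVR, -⟩ := Finset.mem_filter.1 hi
        obtain ⟨c, -, hiC⟩ := Finset.mem_biUnion.1 hiVR
        exact ⟨c, hiC⟩
      set μX : ι → Option R := fun i =>
        if h : i ∈ X then some (hex i h).choose else none with hμX
      have hμXC : ∀ (i : ι) (c : R), μX i = some c → i ∈ X ∧ i ∈ C I (some c) := by
        intro i c hic
        simp only [hμX] at hic
        by_cases h : i ∈ X
        · rw [dif_pos h] at hic
          obtain rfl : (hex i h).choose = c := Option.some.inj hic
          exact ⟨h, (hex i h).choose_spec⟩
        · rw [dif_neg h] at hic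
          exact absurd hic (by simp)
      have hmatchX : IsVRMatching qrr elig X μX := by
        constructor
        · intro i c hic
          obtain ⟨hiX, hiC⟩ := hμXC i c hic
          have := hCsub (some c) hiC
          exact ⟨hiX, (Finset.mem_inter.1 this).2⟩
        · intro c
          have hsubc : (Finset.univ.filter fun i => μX i = some c) ⊆ C I (some c) := by
            intro i hi
            exact (hμXC i c (Finset.mem_filter.1 hi).2).2
          exact (Finset.card_le_card hsubc).trans (hCcap (some c))
      have hmcX : matchedCount μX = X.card := by
        have : (Finset.univ.filter fun i => (μX i).isSome) = X := by
          ext i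
          simp only [Finset.mem_filter, Finset.mem_univ, true_and]
          by_cases h : i ∈ X
          · simp [hμX, h]
          · simp [hμX, h]
        rw [matchedCount, this]
      have hXind : VRmax qrr elig X = X.card := by
        refine le_antisymm (vrmax_le_card X) ?_
        rw [← hmcX]
        exact matching_le_vrmax hmatchX
      -- greedy dominates X above threshold
      have hcntG : X.card ≤ (G.filter fun i => t ≤ σ i).card := by
        have hkey := mGreedy_count (qr := qrr) (elig := elig) hσ (I \ T) X hXJ hXind t
        have hXfix : X.filter (fun i => t ≤ σ i) = X := by
          refine Finset.filter_true_of_mem (fun i hi => (Finset.mem_filter.1 hi).2)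
        rw [hXfix] at hkey
        exact hkey
      rw [hAcnt]
      omega
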